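/- Let n ≥ 3 and α, β > 0. The event {S_{n,α,β}(n−1) = α}, i.e. that the box (n−1,1) of S_{n,α,β} contains an α, has positive probability, and conditionally on this event the subtableau S_{n,α,β}[1,3] (obtained by deleting the first two columns) is distributed as S_{n−2,α,β}: for every T ∈ S̄_{n−2}, P( S_{n,α,β}[1,3] = T | S_{n,α,β}(n−1,1) = α ) = wt(T)/Z_{n−2}(α,β). -/

import Mathlib

/-- The two symbols α, β that may fill a box of an α/β-staircase tableau. -/
inductive ABSymbol : Type
  | A : ABSymbol  -- α
  | B : ABSymbol  -- β
  deriving DecidableEq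

instance : Fintype ABSymbol :=
  ⟨{ABSymbol.A, ABSymbol.B}, fun x => by cases x <;> simp⟩

/-- `f` is an α/β-staircase tableau of size `n`.  Boxes are indexed `0`-based, so
the box `(i, j)` (with `1 ≤ i, j` and `i + j ≤ n + 1` in the `1`-based indexing of
the paper) corresponds to `f ⟨i-1⟩ ⟨j-1⟩`; the condition `i + j ≤ n + 1` becomes
`(i-1) + (j-1) < n`, and the main diagonal `i + j = n + 1` becomes
`(i-1) + (j-1) + 1 = n`. -/
def IsABStaircase (n : ℕ) (f : Fin n → Fin n → Option ABSymbol) : Prop :=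
  (∀ i j : Fin n, n ≤ (i : ℕ) + (j : ℕ) → f i j = none) ∧
  (∀ i j i' : Fin n, f i j = some ABSymbol.A → i' < i → f i' j = none) ∧
  (∀ i j j' : Fin n, f i j = some ABSymbol.B → j' < j → f i j' = none) ∧
  (∀ i j : Fin n, (i : ℕ) + (j : ℕ) + 1 = n → f i j ≠ none)

/-- `N_α(f)`, the number of α's in `f`. -/
def NA (n : ℕ) (f : Fin n → Fin n → Option ABSymbol) : ℕ :=
  (Finset.univ.filter (fun p : Fin n × Fin n => f p.1 p.2 = some ABSymbol.A)).card

/-- `N_β(f)`, the number of β's in `f`. -/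
def NB (n : ℕ) (f : Fin n → Fin n → Option ABSymbol) : ℕ :=
  (Finset.univ.filter (fun p : Fin n × Fin n => f p.1 p.2 = some ABSymbol.B)).card

/-- The weight `wt(f) = α^{N_α(f)} β^{N_β(f)}`. -/
noncomputable def wt (α β : ℝ) (n : ℕ) (f : Fin n → Fin n → Option ABSymbol) : ℝ :=
  α ^ NA n f * β ^ NB n f

open scoped Classical in
/-- The partition function `Z_n(α, β) = Σ_{S ∈ S̄_n} wt(S)`. -/
noncomputable def Z (α β : ℝ) (n : ℕ) : ℝ :=
  ∑ f ∈ Finset.univ.filter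
      (fun f : Fin n → Fin n → Option ABSymbol => IsABStaircase n f),
    wt α β n f

open scoped Classical in
/-- The probability that the random tableau `S_{n,α,β}` lies in the event `E`. -/
noncomputable def stProb (α β : ℝ) (n : ℕ)
    (E : (Fin n → Fin n → Option ABSymbol) → Prop) : ℝ :=
  (∑ f ∈ Finset.univ.filter
      (fun f : Fin n → Fin n → Option ABSymbol => IsABStaircase n f ∧ E f),
    wt α β n f) / Z α β n

open scoped Classical in
/-- The expectation of `g` under the law of the random tableau `S_{n,α,β}`. -/
noncomputable def stExp (α β : ℝ) (n : ℕ)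
    (g : (Fin n → Fin n → Option ABSymbol) → ℝ) : ℝ :=
  (∑ f ∈ Finset.univ.filter
      (fun f : Fin n → Fin n → Option ABSymbol => IsABStaircase n f),
    wt α β n f * g f) / Z α β n

/-- `diag2 f j` is the content of the second-main-diagonal box `(n - j, j)`
(in the `1`-based indexing of the paper), defined for `1 ≤ j ≤ n - 1`. -/
def diag2 {n : ℕ} (f : Fin n → Fin n → Option ABSymbol) (j : ℕ) : Option ABSymbol :=
  if h : 1 ≤ j ∧ j + 1 ≤ n then f ⟨n - j - 1, by omega⟩ ⟨j - 1, by omega⟩ else none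

/-- `A_n`, the number of α's on the second main diagonal of `f`. -/
def Acount (n : ℕ) (f : Fin n → Fin n → Option ABSymbol) : ℕ :=
  ((Finset.Icc 1 (n - 1)).filter (fun j => diag2 f j = some ABSymbol.A)).card

/-- `B_n`, the number of β's on the second main diagonal of `f`. -/
def Bcount (n : ℕ) (f : Fin n → Fin n → Option ABSymbol) : ℕ :=
  ((Finset.Icc 1 (n - 1)).filter (fun j => diag2 f j = some ABSymbol.B)).card

/-- `X_n`, the number of nonempty boxes on the second main diagonal of `f`. -/
def Xcount (n : ℕ) (f : Fin n → Fin n → Option ABSymbol) : ℕ :=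
  ((Finset.Icc 1 (n - 1)).filter (fun j => diag2 f j ≠ none)).card

/-- `J_{r,m}`: the set of `r`-tuples `1 ≤ j_1 < … < j_r ≤ m` with
`j_k ≤ j_{k+1} - 2` for all `k`. -/
def Jset (r m : ℕ) : Finset (Fin r → ℕ) :=
  (Fintype.piFinset (fun _ : Fin r => Finset.Icc 1 m)).filter
    (fun j => ∀ k l : Fin r, k < l → j k + 2 ≤ j l)

/-- The subtableau `S[1,3]` of size `n - 2` obtained by deleting the first two
columns of `S`. -/
def subTab (n : ℕ) (f : Fin n → Fin n → Option ABSymbol) :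
    Fin (n - 2) → Fin (n - 2) → Option ABSymbol :=
  fun i j =>
    f ⟨(i : ℕ), by have := i.isLt; omega⟩ ⟨(j : ℕ) + 2, by have := j.isLt; omega⟩

-- AUX START

open Finset
open scoped Classical

/-- extend a tableau of size m to one of size m+2 by adding two columns on the left. -/
def extT (m : ℕ) (T : Fin m → Fin m → Option ABSymbol) :
    Fin (m + 2) → Fin (m + 2) → Option ABSymbol :=
  fun i j =>
    if h0 : (j : ℕ) = 0 then
      (if (i : ℕ) = m then some ABSymbol.A
       else if (i : ℕ) = m + 1 then some ABSymbol.B else none)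
    else if h1 : (j : ℕ) = 1 then (if (i : ℕ) = m then some ABSymbol.A else none)
    else if h2 : (i : ℕ) + (j : ℕ) < m + 2 then
      T ⟨(i : ℕ), by omega⟩ ⟨(j : ℕ) - 2, by omega⟩
    else none

lemma extT_stair (m : ℕ) (T : Fin m → Fin m → Option ABSymbol)
    (hT : IsABStaircase m T) : IsABStaircase (m + 2) (extT m T) := by
  obtain ⟨hT1, hT2, hT3, hT4⟩ := hT
  refine ⟨?_, ?_, ?_, ?_⟩
  · intro i j hij
    have hi := i.isLt; have hj := j.isLt
    unfold extT
    by_cases h0 : (j : ℕ) = 0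
    · omega
    · rw [dif_neg h0]
      by_cases h1 : (j : ℕ) = 1
      · rw [dif_pos h1, if_neg (by omega)]
      · rw [dif_neg h1, dif_neg (by omega)]
  · intro i j i' hij hlt
    have hi := i.isLt; have hj := j.isLt; have hi' := i'.isLt
    have hlt' : (i' : ℕ) < (i : ℕ) := hlt
    unfold extT at hij ⊢
    by_cases h0 : (j : ℕ) = 0
    · rw [dif_pos h0] at hij
      rw [dif_pos h0]
      have ha : (i : ℕ) = m := by
        by_contra hc
        rw [if_neg hc] at hij
        split_ifs at hij <;> simp_all
      rw [if_neg (show ¬(i' : ℕ) = m by omega),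
        if_neg (show ¬(i' : ℕ) = m + 1 by omega)]
    · rw [dif_neg h0] at hij; rw [dif_neg h0]
      by_cases h1 : (j : ℕ) = 1
      · rw [dif_pos h1] at hij; rw [dif_pos h1]
        have ha : (i : ℕ) = m := by
          by_contra hc
          rw [if_neg hc] at hij
          simp at hij
        rw [if_neg (show ¬(i' : ℕ) = m by omega)]
      · rw [dif_neg h1] at hij; rw [dif_neg h1]
        by_cases h2 : (i : ℕ) + (j : ℕ) < m + 2
        · rw [dif_pos h2] at hij
          rw [dif_pos (by omega)]
          exact hT2 ⟨(i : ℕ), by omega⟩ ⟨(j : ℕ) - 2, by omega⟩ ⟨(i' : ℕ), by omega⟩ hij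
            (Fin.mk_lt_mk.mpr hlt')
        · rw [dif_neg h2] at hij; exact absurd hij (by simp)
  · intro i j j' hij hlt
    have hi := i.isLt; have hj := j.isLt; have hj' := j'.isLt
    have hlt' : (j' : ℕ) < (j : ℕ) := hlt
    unfold extT at hij ⊢
    by_cases h0 : (j : ℕ) = 0
    · omega
    · rw [dif_neg h0] at hij
      by_cases h1 : (j : ℕ) = 1
      · rw [dif_pos h1] at hij
        split_ifs at hij <;> simp_all
      · rw [dif_neg h1] at hij
        by_cases h2 : (i : ℕ) + (j : ℕ) < m + 2
        · rw [dif_pos h2] at hij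
          by_cases g0 : (j' : ℕ) = 0
          · rw [dif_pos g0, if_neg (by omega), if_neg (by omega)]
          · rw [dif_neg g0]
            by_cases g1 : (j' : ℕ) = 1
            · rw [dif_pos g1, if_neg (by omega)]
            · rw [dif_neg g1, dif_pos (by omega)]
              exact hT3 ⟨(i : ℕ), by omega⟩ ⟨(j : ℕ) - 2, by omega⟩ ⟨(j' : ℕ) - 2, by omega⟩
                hij (Fin.mk_lt_mk.mpr (by omega))
        · rw [dif_neg h2] at hij; exact absurd hij (by simp)
  · intro i j hdiag
    unfold extT
    by_cases h0 : (j : ℕ) = 0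
    · rw [dif_pos h0, if_neg (by omega), if_pos (by omega)]; simp
    · rw [dif_neg h0]
      by_cases h1 : (j : ℕ) = 1
      · rw [dif_pos h1, if_pos (by omega)]; simp
      · rw [dif_neg h1, dif_pos (by omega)]
        exact hT4 ⟨(i : ℕ), by omega⟩ ⟨(j : ℕ) - 2, by omega⟩ (by simp; omega)

lemma sub_stair (m : ℕ) (f : Fin (m + 2) → Fin (m + 2) → Option ABSymbol)
    (hf : IsABStaircase (m + 2) f) : IsABStaircase m (subTab (m + 2) f) := by
  obtain ⟨h1, h2, h3, h4⟩ := hf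
  refine ⟨?_, ?_, ?_, ?_⟩
  · intro i j hij
    exact h1 _ _ (by simp; omega)
  · intro i j i' hij hlt
    exact h2 _ _ _ hij (by simpa using hlt)
  · intro i j j' hij hlt
    have : ((j' : ℕ) + 2) < ((j : ℕ) + 2) := by have := (Fin.lt_def.mp hlt); omega
    exact h3 _ _ _ hij (by simpa using this)
  · intro i j hdiag
    exact h4 _ _ (by simp; omega)

lemma recon (m : ℕ) (f : Fin (m + 2) → Fin (m + 2) → Option ABSymbol)
    (hf : IsABStaircase (m + 2) f)
    (hA : f ⟨m, by omega⟩ ⟨0, by omega⟩ = some ABSymbol.A) :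
    f = extT m (subTab (m + 2) f) := by
  obtain ⟨c1, c2, c3, c4⟩ := hf
  have hB : f ⟨m + 1, by omega⟩ ⟨0, by omega⟩ = some ABSymbol.B := by
    have hne := c4 ⟨m + 1, by omega⟩ ⟨0, by omega⟩ (by simp)
    rcases h : f ⟨m + 1, by omega⟩ ⟨0, by omega⟩ with _ | s
    · exact absurd h hne
    · cases s with
      | A =>
        have := c2 ⟨m + 1, by omega⟩ ⟨0, by omega⟩ ⟨m, by omega⟩ h
          (Fin.mk_lt_mk.mpr (by omega))
        rw [this] at hA; exact absurd hA (by simp)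
      | B => rfl
  have hA2 : f ⟨m, by omega⟩ ⟨1, by omega⟩ = some ABSymbol.A := by
    have hne := c4 ⟨m, by omega⟩ ⟨1, by omega⟩ (by simp)
    rcases h : f ⟨m, by omega⟩ ⟨1, by omega⟩ with _ | s
    · exact absurd h hne
    · cases s with
      | A => rfl
      | B =>
        have := c3 ⟨m, by omega⟩ ⟨1, by omega⟩ ⟨0, by omega⟩ h
          (Fin.mk_lt_mk.mpr (by omega))
        rw [this] at hA; exact absurd hA (by simp)
  funext i j
  have hi := i.isLt; have hj := j.isLt
  unfold extT subTab
  by_cases h0 : (j : ℕ) = 0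
  · have hj0 : j = ⟨0, by omega⟩ := Fin.ext h0
    rw [dif_pos h0]
    by_cases ha : (i : ℕ) = m
    · rw [if_pos ha]
      have hie : i = ⟨m, by omega⟩ := Fin.ext ha
      rw [hie, hj0]; exact hA
    · rw [if_neg ha]
      by_cases hb : (i : ℕ) = m + 1
      · rw [if_pos hb]
        have hie : i = ⟨m + 1, by omega⟩ := Fin.ext hb
        rw [hie, hj0]; exact hB
      · rw [if_neg hb, hj0]
        exact c2 ⟨m, by omega⟩ ⟨0, by omega⟩ i hA
          (Fin.lt_def.mpr (show (i : ℕ) < m by omega))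
  · rw [dif_neg h0]
    by_cases h1 : (j : ℕ) = 1
    · have hj1 : j = ⟨1, by omega⟩ := Fin.ext h1
      rw [dif_pos h1]
      by_cases ha : (i : ℕ) = m
      · rw [if_pos ha]
        have hie : i = ⟨m, by omega⟩ := Fin.ext ha
        rw [hie, hj1]; exact hA2
      · rw [if_neg ha, hj1]
        rcases lt_or_ge (i : ℕ) m with h | h
        · exact c2 ⟨m, by omega⟩ ⟨1, by omega⟩ i hA2
            (Fin.lt_def.mpr (show (i : ℕ) < m by omega))
        · exact c1 i ⟨1, by omega⟩ (by simp; omega)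
    · by_cases h2 : (i : ℕ) + (j : ℕ) < m + 2
      · rw [dif_neg h1, dif_pos h2]
        congr 1
        all_goals try (apply Fin.ext; simp; omega)
      · rw [dif_neg h1, dif_neg h2]
        exact c1 i j (by omega)

lemma sub_extT (m : ℕ) (T : Fin m → Fin m → Option ABSymbol)
    (hT : IsABStaircase m T) : subTab (m + 2) (extT m T) = T := by
  funext i j
  have hi := i.isLt; have hj := j.isLt
  unfold subTab extT
  by_cases hc : (i : ℕ) + (j : ℕ) < m
  · rw [dif_neg (by simp), dif_neg (by simp), dif_pos (by simp; omega)]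
    congr 1
    all_goals try (apply Fin.ext; simp)
  · rw [dif_neg (by simp), dif_neg (by simp), dif_neg (by simp; omega)]
    exact (hT.1 i j (by omega)).symm

lemma extT_at (m : ℕ) (T : Fin m → Fin m → Option ABSymbol) :
    extT m T ⟨m, by omega⟩ ⟨0, by omega⟩ = some ABSymbol.A := by
  unfold extT; simp

/-- the embedding of boxes -/
def emb (m : ℕ) : Fin m × Fin m ↪ Fin (m + 2) × Fin (m + 2) where
  toFun p := (⟨(p.1 : ℕ), by have := p.1.isLt; omega⟩, ⟨(p.2 : ℕ) + 2, by have := p.2.isLt; omega⟩)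
  inj' := by
    intro p q h
    simp only [Prod.mk.injEq, Fin.mk.injEq] at h
    exact Prod.ext (Fin.ext h.1) (Fin.ext (by omega))

lemma emb_apply (m : ℕ) (p : Fin m × Fin m) : emb m p =
    (⟨(p.1 : ℕ), by have := p.1.isLt; omega⟩, ⟨(p.2 : ℕ) + 2, by have := p.2.isLt; omega⟩) := rfl

open scoped Classical in
lemma filterA_extT (m : ℕ) (T : Fin m → Fin m → Option ABSymbol)
    (hT : IsABStaircase m T) :
    (Finset.univ.filter
        (fun p : Fin (m + 2) × Fin (m + 2) => extT m T p.1 p.2 = some ABSymbol.A))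
      = insert (⟨m, by omega⟩, ⟨0, by omega⟩)
          (insert (⟨m, by omega⟩, ⟨1, by omega⟩)
            ((Finset.univ.filter
               (fun p : Fin m × Fin m => T p.1 p.2 = some ABSymbol.A)).map (emb m))) := by
  ext ⟨i, j⟩
  simp only [mem_filter, mem_univ, true_and, mem_insert, mem_map, Prod.mk.injEq, Prod.ext_iff]
  constructor
  · intro h
    have hi := i.isLt; have hj := j.isLt
    unfold extT at h
    by_cases h0 : (j : ℕ) = 0
    · rw [dif_pos h0] at h
      have ha : (i : ℕ) = m := by
        by_contra hc
        rw [if_neg hc] at h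
        split_ifs at h <;> simp_all
      left; exact ⟨Fin.ext ha, Fin.ext h0⟩
    · rw [dif_neg h0] at h
      by_cases h1 : (j : ℕ) = 1
      · rw [dif_pos h1] at h
        have ha : (i : ℕ) = m := by
          by_contra hc
          rw [if_neg hc] at h
          simp at h
        right; left; exact ⟨Fin.ext ha, Fin.ext h1⟩
      · rw [dif_neg h1] at h
        by_cases h2 : (i : ℕ) + (j : ℕ) < m + 2
        · rw [dif_pos h2] at h
          right; right
          refine ⟨(⟨(i : ℕ), by omega⟩, ⟨(j : ℕ) - 2, by omega⟩), h, ?_, ?_⟩ <;>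
            (apply Fin.ext; simp [emb_apply]; try omega)
        · rw [dif_neg h2] at h; exact absurd h (by simp)
  · intro h
    rcases h with ⟨hi, hj⟩ | ⟨hi, hj⟩ | ⟨⟨p, q⟩, hpq, he⟩
    · subst hi; subst hj; unfold extT; simp
    · subst hi; subst hj; unfold extT; simp
    · simp only [emb, Function.Embedding.coeFn_mk] at he
      obtain ⟨he1, he2⟩ := he
      have hpm := p.isLt; have hqm := q.isLt
      have hiv : (i : ℕ) = (p : ℕ) := by rw [← he1]; rfl
      have hjv : (j : ℕ) = (q : ℕ) + 2 := by rw [← he2]; rfl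
      have hsum : (p : ℕ) + (q : ℕ) < m := by
        by_contra hc
        rw [hT.1 p q (by omega)] at hpq; exact absurd hpq (by simp)
      unfold extT
      rw [dif_neg (by omega), dif_neg (by omega), dif_pos (by omega)]
      convert hpq using 2 <;> (apply Fin.ext; simp; omega)

open scoped Classical in
lemma filterB_extT (m : ℕ) (T : Fin m → Fin m → Option ABSymbol)
    (hT : IsABStaircase m T) :
    (Finset.univ.filter
        (fun p : Fin (m + 2) × Fin (m + 2) => extT m T p.1 p.2 = some ABSymbol.B))
      = insert (⟨m + 1, by omega⟩, ⟨0, by omega⟩)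
          ((Finset.univ.filter
             (fun p : Fin m × Fin m => T p.1 p.2 = some ABSymbol.B)).map (emb m)) := by
  ext ⟨i, j⟩
  simp only [mem_filter, mem_univ, true_and, mem_insert, mem_map, Prod.mk.injEq, Prod.ext_iff]
  constructor
  · intro h
    have hi := i.isLt; have hj := j.isLt
    unfold extT at h
    by_cases h0 : (j : ℕ) = 0
    · rw [dif_pos h0] at h
      have ha : ¬ (i : ℕ) = m := by
        intro hc; rw [if_pos hc] at h; simp at h
      have hb : (i : ℕ) = m + 1 := by
        by_contra hc
        rw [if_neg ha, if_neg hc] at h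
        simp at h
      left; exact ⟨Fin.ext hb, Fin.ext h0⟩
    · rw [dif_neg h0] at h
      by_cases h1 : (j : ℕ) = 1
      · rw [dif_pos h1] at h
        split_ifs at h <;> simp_all
      · rw [dif_neg h1] at h
        by_cases h2 : (i : ℕ) + (j : ℕ) < m + 2
        · rw [dif_pos h2] at h
          right
          refine ⟨(⟨(i : ℕ), by omega⟩, ⟨(j : ℕ) - 2, by omega⟩), h, ?_, ?_⟩ <;>
            (apply Fin.ext; simp [emb_apply]; try omega)
        · rw [dif_neg h2] at h; exact absurd h (by simp)
  · intro h
    rcases h with ⟨hi, hj⟩ | ⟨⟨p, q⟩, hpq, he⟩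
    · subst hi; subst hj; unfold extT; simp
    · simp only [emb, Function.Embedding.coeFn_mk] at he
      obtain ⟨he1, he2⟩ := he
      have hpm := p.isLt; have hqm := q.isLt
      have hiv : (i : ℕ) = (p : ℕ) := by rw [← he1]; rfl
      have hjv : (j : ℕ) = (q : ℕ) + 2 := by rw [← he2]; rfl
      have hsum : (p : ℕ) + (q : ℕ) < m := by
        by_contra hc
        rw [hT.1 p q (by omega)] at hpq; exact absurd hpq (by simp)
      unfold extT
      rw [dif_neg (by omega), dif_neg (by omega), dif_pos (by omega)]
      convert hpq using 2 <;> (apply Fin.ext; simp; omega)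

lemma NA_extT (m : ℕ) (T : Fin m → Fin m → Option ABSymbol)
    (hT : IsABStaircase m T) : NA (m + 2) (extT m T) = NA m T + 2 := by
  unfold NA
  rw [filterA_extT m T hT]
  have nm1 : ((⟨m, by omega⟩, ⟨1, by omega⟩) : Fin (m + 2) × Fin (m + 2)) ∉
      (Finset.univ.filter
        (fun p : Fin m × Fin m => T p.1 p.2 = some ABSymbol.A)).map (emb m) := by
    intro hmem
    rw [mem_map] at hmem
    obtain ⟨⟨p, q⟩, -, he⟩ := hmem
    have := congrArg (fun x : Fin (m + 2) × Fin (m + 2) => (x.2 : ℕ)) he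
    simp only [emb_apply, Fin.val_mk] at this; omega
  have nm0 : ((⟨m, by omega⟩, ⟨0, by omega⟩) : Fin (m + 2) × Fin (m + 2)) ∉
      insert (⟨m, by omega⟩, ⟨1, by omega⟩)
        ((Finset.univ.filter
          (fun p : Fin m × Fin m => T p.1 p.2 = some ABSymbol.A)).map (emb m)) := by
    intro hmem
    rcases mem_insert.mp hmem with h | h
    · have := congrArg (fun x : Fin (m + 2) × Fin (m + 2) => (x.2 : ℕ)) h
      simp at this
    · rw [mem_map] at h
      obtain ⟨⟨p, q⟩, -, he⟩ := h
      have := congrArg (fun x : Fin (m + 2) × Fin (m + 2) => (x.2 : ℕ)) he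
      simp only [emb_apply, Fin.val_mk] at this; omega
  rw [card_insert_of_notMem nm0, card_insert_of_notMem nm1, card_map]

lemma NB_extT (m : ℕ) (T : Fin m → Fin m → Option ABSymbol)
    (hT : IsABStaircase m T) : NB (m + 2) (extT m T) = NB m T + 1 := by
  unfold NB
  rw [filterB_extT m T hT]
  have nm : ((⟨m + 1, by omega⟩, ⟨0, by omega⟩) : Fin (m + 2) × Fin (m + 2)) ∉
      (Finset.univ.filter
        (fun p : Fin m × Fin m => T p.1 p.2 = some ABSymbol.B)).map (emb m) := by
    intro hmem
    rw [mem_map] at hmem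
    obtain ⟨⟨p, q⟩, -, he⟩ := hmem
    have := congrArg (fun x : Fin (m + 2) × Fin (m + 2) => (x.2 : ℕ)) he
    simp only [emb_apply, Fin.val_mk] at this; omega
  rw [card_insert_of_notMem nm, card_map]

lemma wt_extT (α β : ℝ) (m : ℕ) (T : Fin m → Fin m → Option ABSymbol)
    (hT : IsABStaircase m T) :
    wt α β (m + 2) (extT m T) = α ^ 2 * β * wt α β m T := by
  unfold wt
  rw [NA_extT m T hT, NB_extT m T hT]
  ring

lemma wt_pos (α β : ℝ) (hα : 0 < α) (hβ : 0 < β) (n : ℕ)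
    (f : Fin n → Fin n → Option ABSymbol) : 0 < wt α β n f :=
  mul_pos (pow_pos hα _) (pow_pos hβ _)

def diagT (n : ℕ) : Fin n → Fin n → Option ABSymbol :=
  fun i j => if (i : ℕ) + (j : ℕ) + 1 = n then some ABSymbol.A else none

lemma diagT_stair (n : ℕ) : IsABStaircase n (diagT n) := by
  refine ⟨?_, ?_, ?_, ?_⟩
  · intro i j h; unfold diagT; rw [if_neg (by omega)]
  · intro i j i' h hlt
    unfold diagT at h ⊢
    split_ifs at h with h1
    rw [if_neg (by have := Fin.lt_def.mp hlt; omega)]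
  · intro i j j' h hlt
    unfold diagT at h
    split_ifs at h with h1 <;> exact absurd h (by simp)
  · intro i j h; unfold diagT; rw [if_pos h]; simp

lemma Z_pos (α β : ℝ) (hα : 0 < α) (hβ : 0 < β) (n : ℕ) : 0 < Z α β n := by
  unfold Z
  refine Finset.sum_pos (fun f _ => wt_pos α β hα hβ n f) ⟨diagT n, ?_⟩
  simp [diagT_stair n]

lemma diag2_one (m : ℕ) (f : Fin (m + 2) → Fin (m + 2) → Option ABSymbol) :
    diag2 f 1 = f ⟨m, by omega⟩ ⟨0, by omega⟩ := by
  unfold diag2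
  rw [dif_pos ⟨le_refl 1, by omega⟩]
  rfl

lemma stProb_div (α β : ℝ) (n : ℕ) (E : (Fin n → Fin n → Option ABSymbol) → Prop)
    (v : ℝ)
    [inst : DecidablePred fun f : Fin n → Fin n → Option ABSymbol => IsABStaircase n f ∧ E f]
    (h : (∑ f ∈ @Finset.filter _
        (fun f : Fin n → Fin n → Option ABSymbol => IsABStaircase n f ∧ E f) inst
        Finset.univ,
      wt α β n f) = v) :
    stProb α β n E = v / Z α β n := by
  rw [← h]
  unfold stProb
  congr 1
  refine Finset.sum_congr ?_ (fun _ _ => rfl)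
  ext x
  simp only [Finset.mem_filter]

-- AUX END

/-- Lemma 1 (`SWCorner`): conditionally on the box `(n-1, 1)` of `S_{n,α,β}`
containing an α, the subtableau `S_{n,α,β}[1,3]` is distributed as `S_{n-2,α,β}`. -/
theorem stmt1 (n : ℕ) (hn : 3 ≤ n) (α β : ℝ) (hα : 0 < α) (hβ : 0 < β) :
    0 < stProb α β n (fun f => diag2 f 1 = some ABSymbol.A) ∧
    ∀ T : Fin (n - 2) → Fin (n - 2) → Option ABSymbol, IsABStaircase (n - 2) T →
      stProb α β n (fun f => diag2 f 1 = some ABSymbol.A ∧ subTab n f = T) /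
          stProb α β n (fun f => diag2 f 1 = some ABSymbol.A)
        = wt α β (n - 2) T / Z α β (n - 2) := by
  obtain ⟨m, rfl⟩ : ∃ m, n = m + 2 := ⟨n - 2, by omega⟩
  have hm2 : m + 2 - 2 = m := by omega
  -- key sum over the event
  have hsum : (∑ f ∈ Finset.univ.filter
      (fun f : Fin (m + 2) → Fin (m + 2) → Option ABSymbol =>
        IsABStaircase (m + 2) f ∧ diag2 f 1 = some ABSymbol.A),
      wt α β (m + 2) f) = α ^ 2 * β * Z α β m := by
    unfold Z
    rw [Finset.mul_sum]
    refine Finset.sum_nbij' (subTab (m + 2)) (extT m) ?_ ?_ ?_ ?_ ?_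
    · intro f hf
      simp only [mem_filter, mem_univ, true_and] at hf ⊢
      exact sub_stair m f hf.1
    · intro T hT
      simp only [mem_filter, mem_univ, true_and] at hT ⊢
      refine ⟨extT_stair m T hT, ?_⟩
      rw [diag2_one m]
      exact extT_at m T
    · intro f hf
      simp only [mem_filter, mem_univ, true_and] at hf
      rw [diag2_one m] at hf
      exact (recon m f hf.1 hf.2).symm
    · intro T hT
      simp only [mem_filter, mem_univ, true_and] at hT
      exact sub_extT m T hT
    · intro f hf
      simp only [mem_filter, mem_univ, true_and] at hf
      rw [diag2_one m] at hf
      have hsub := sub_stair m f hf.1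
      conv_lhs => rw [recon m f hf.1 hf.2]
      exact wt_extT α β m (subTab (m + 2) f) hsub
  have hZm := Z_pos α β hα hβ m
  have hZn := Z_pos α β hα hβ (m + 2)
  have hprob : stProb α β (m + 2) (fun f => diag2 f 1 = some ABSymbol.A)
      = α ^ 2 * β * Z α β m / Z α β (m + 2) := by
    exact stProb_div α β (m + 2) _ _ hsum
  constructor
  · rw [hprob]
    exact div_pos (by positivity) hZn
  · intro T hT
    have hT' : IsABStaircase m T := hT
    have hfiber : (Finset.univ.filter
        (fun f : Fin (m + 2) → Fin (m + 2) → Option ABSymbol =>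
          IsABStaircase (m + 2) f ∧ (diag2 f 1 = some ABSymbol.A ∧ subTab (m + 2) f = T)))
        = {extT m T} := by
      ext f
      simp only [mem_filter, mem_univ, true_and, mem_singleton]
      constructor
      · rintro ⟨h1, h2, h3⟩
        rw [diag2_one m] at h2
        rw [recon m f h1 h2, h3]
      · rintro rfl
        refine ⟨extT_stair m T hT', ?_, sub_extT m T hT'⟩
        rw [diag2_one m]; exact extT_at m T
    have hnum : stProb α β (m + 2)
        (fun f => diag2 f 1 = some ABSymbol.A ∧ subTab (m + 2) f = T)
        = α ^ 2 * β * wt α β m T / Z α β (m + 2) := by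
      have key : (∑ f ∈ Finset.univ.filter
          (fun f : Fin (m + 2) → Fin (m + 2) → Option ABSymbol =>
            IsABStaircase (m + 2) f ∧
              (diag2 f 1 = some ABSymbol.A ∧ subTab (m + 2) f = T)),
          wt α β (m + 2) f) = α ^ 2 * β * wt α β m T := by
        rw [hfiber, Finset.sum_singleton, wt_extT α β m T hT']
      exact stProb_div α β (m + 2) _ _ key
    rw [hprob, hnum]
    have hwt : wt α β (m + 2 - 2) T = wt α β m T := rfl
    have hZ : Z α β (m + 2 - 2) = Z α β m := by rw [hm2]
    rw [hwt, hZ]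
    have hne1 : Z α β (m + 2) ≠ 0 := ne_of_gt hZn
    have hne2 : Z α β m ≠ 0 := ne_of_gt hZm
    field_simp
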